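/- For every finitely supported u ∈ ℓ²(ℤ^d), one has i(Δ(A₀u) − A₀(Δu)) = Σ_{i=1}^d Δ_i(4 − Δ_i)u, where Δ_i is the Laplacian in the i-th coordinate, (Δ_i u)(n) := 2u(n) − u(n−e_i) − u(n+e_i). In particular, the commutator form [Δ, iA₀], defined on finitely supported sequences, extends to the bounded self-adjoint operator Σ_{i=1}^d Δ_i(4 − Δ_i). (For d = 1 this reads [Δ, iA₀] = Δ(4 − Δ).) -/

import Mathlib

noncomputable section

open scoped ENNReal

/-- The Hilbert space ℓ²(ℤ^d). -/
abbrev l2Zd (d : ℕ) : Type := lp (fun _ : Fin d → ℤ => ℂ) 2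

/-- The discrete Laplacian, acting on functions ℤ^d → ℂ. -/
def lapFun (d : ℕ) (u : (Fin d → ℤ) → ℂ) (n : Fin d → ℤ) : ℂ :=
  ∑ i : Fin d,
    (2 * u n - u (Function.update n i (n i + 1)) - u (Function.update n i (n i - 1)))

/-- The Laplacian in the i-th coordinate: (Δ_i u)(n) = 2u(n) − u(n−e_i) − u(n+e_i). -/
def lapIFun (d : ℕ) (i : Fin d) (u : (Fin d → ℤ) → ℂ) (n : Fin d → ℤ) : ℂ :=
  2 * u n - u (Function.update n i (n i + 1)) - u (Function.update n i (n i - 1))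

/-- The generator of dilations A₀ := i Σ_{i=1}^d (½(S_i*+S_i) − (S_i*−S_i)N_i), acting on
functions ℤ^d → ℂ. -/
def A0fun (d : ℕ) (u : (Fin d → ℤ) → ℂ) (n : Fin d → ℤ) : ℂ :=
  Complex.I * ∑ i : Fin d,
    ((u (Function.update n i (n i + 1)) + u (Function.update n i (n i - 1))) / 2 -
      (((n i : ℂ) + 1) * u (Function.update n i (n i + 1)) -
        ((n i : ℂ) - 1) * u (Function.update n i (n i - 1))))

namespace CommAux

variable {d : ℕ} (u : (Fin d → ℤ) → ℂ) (n : Fin d → ℤ)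

/-! ### The algebraic (pointwise) commutator identity -/

lemma rhs_lemma (d : ℕ) (i : Fin d) (u : (Fin d → ℤ) → ℂ) (n : Fin d → ℤ) :
    lapIFun d i (fun m => 4 * u m - lapIFun d i u m) n
      = 2 * u n - u (Function.update n i (n i + 2)) - u (Function.update n i (n i - 2)) := by
  have h1 : n i + 1 + 1 = n i + 2 := by ring
  have h2 : n i + 1 - 1 = n i := by ring
  have h3 : n i - 1 + 1 = n i := by ring
  have h4 : n i - 1 - 1 = n i - 2 := by ring
  simp only [lapIFun, Function.update_self, Function.update_idem, h1, h2, h3, h4,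
    Function.update_eq_self]
  ring

/-- The summand of A₀ (without the factor I). -/
def gA (u : (Fin d → ℤ) → ℂ) (j : Fin d) (m : Fin d → ℤ) : ℂ :=
  (u (Function.update m j (m j + 1)) + u (Function.update m j (m j - 1))) / 2 -
    (((m j : ℂ) + 1) * u (Function.update m j (m j + 1)) -
      ((m j : ℂ) - 1) * u (Function.update m j (m j - 1)))

/-- The summand of the Laplacian. -/
def hL (u : (Fin d → ℤ) → ℂ) (i : Fin d) (m : Fin d → ℤ) : ℂ :=
  2 * u m - u (Function.update m i (m i + 1)) - u (Function.update m i (m i - 1))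

def Pterm (u : (Fin d → ℤ) → ℂ) (n : Fin d → ℤ) (i j : Fin d) : ℂ :=
  2 * gA u j n - gA u j (Function.update n i (n i + 1)) - gA u j (Function.update n i (n i - 1))

def Qterm (u : (Fin d → ℤ) → ℂ) (n : Fin d → ℤ) (i j : Fin d) : ℂ :=
  (hL u i (Function.update n j (n j + 1)) + hL u i (Function.update n j (n j - 1))) / 2 -
    (((n j : ℂ) + 1) * hL u i (Function.update n j (n j + 1)) -
      ((n j : ℂ) - 1) * hL u i (Function.update n j (n j - 1)))

lemma stepA : lapFun d (A0fun d u) n = Complex.I * ∑ i : Fin d, ∑ j : Fin d, Pterm u n i j := by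
  unfold lapFun A0fun Pterm gA
  conv_rhs => rw [Finset.mul_sum]
  refine Finset.sum_congr rfl fun i _ => ?_
  simp only [Finset.mul_sum]
  rw [← Finset.sum_sub_distrib, ← Finset.sum_sub_distrib]
  refine Finset.sum_congr rfl fun j _ => ?_
  ring

lemma stepB : A0fun d (lapFun d u) n = Complex.I * ∑ j : Fin d, ∑ i : Fin d, Qterm u n i j := by
  unfold A0fun
  congr 1
  refine Finset.sum_congr rfl fun j _ => ?_
  unfold lapFun Qterm hL
  simp only [Finset.mul_sum, Finset.sum_div]
  rw [← Finset.sum_add_distrib, ← Finset.sum_sub_distrib, Finset.sum_div,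
    ← Finset.sum_sub_distrib]

lemma offdiag (i j : Fin d) (hij : i ≠ j) : Qterm u n i j = Pterm u n i j := by
  simp only [Qterm, Pterm, gA, hL, Function.update_of_ne hij, Function.update_of_ne hij.symm,
    Function.update_comm hij]
  ring

lemma diag (i : Fin d) : Qterm u n i i - Pterm u n i i
    = 2 * u n - u (Function.update n i (n i + 2)) - u (Function.update n i (n i - 2)) := by
  have h1 : n i + 1 + 1 = n i + 2 := by ring
  have h2 : n i + 1 - 1 = n i := by ring
  have h3 : n i - 1 + 1 = n i := by ring
  have h4 : n i - 1 - 1 = n i - 2 := by ring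
  simp only [Qterm, Pterm, gA, hL, Function.update_self, Function.update_idem, h1, h2, h3, h4,
    Function.update_eq_self]
  push_cast
  ring

lemma key : Complex.I * (lapFun d (A0fun d u) n - A0fun d (lapFun d u) n)
    = ∑ i : Fin d,
        (2 * u n - u (Function.update n i (n i + 2)) - u (Function.update n i (n i - 2))) := by
  have hI : ∀ a b : ℂ, Complex.I * (Complex.I * a - Complex.I * b) = b - a := by
    intro a b
    have h := Complex.I_mul_I
    calc Complex.I * (Complex.I * a - Complex.I * b) = Complex.I * Complex.I * (a - b) := by ring
    _ = b - a := by rw [h]; ring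
  rw [stepA, stepB, Finset.sum_comm, hI, ← Finset.sum_sub_distrib]
  refine Finset.sum_congr rfl fun i _ => ?_
  rw [← Finset.sum_sub_distrib, Finset.sum_eq_single i
    (fun j _ hji => by rw [offdiag u n j i hji, sub_self])
    (fun h => absurd (Finset.mem_univ i) h)]
  exact diag u n i

/-! ### Translation operators on ℓ²(ℤ^d) -/

lemma transMem (v : Fin d → ℤ) (u : l2Zd d) : Memℓp (fun n => u (n + v)) 2 := by
  rw [memℓp_gen_iff (by norm_num)]
  have := ((memℓp_gen_iff (p := 2) (f := (u : (Fin d → ℤ) → ℂ)) (by norm_num)).1 u.2)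
  exact ((Equiv.addRight v).summable_iff
    (f := fun n => ‖(u : (Fin d → ℤ) → ℂ) n‖ ^ (2:ℝ≥0∞).toReal)).2 this

def transLM (v : Fin d → ℤ) : l2Zd d →ₗ[ℂ] l2Zd d where
  toFun u := ⟨fun n => u (n + v), transMem v u⟩
  map_add' u w := by apply lp.ext; ext n; simp [lp.coeFn_add]; rfl
  map_smul' c u := by apply lp.ext; ext n; simp [lp.coeFn_smul]

lemma norm_transLM (v : Fin d → ℤ) (u : l2Zd d) : ‖transLM v u‖ = ‖u‖ := by
  rw [lp.norm_eq_tsum_rpow (by norm_num) (transLM v u), lp.norm_eq_tsum_rpow (by norm_num) u]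
  congr 1
  exact ((Equiv.addRight v).tsum_eq
    (f := fun n => ‖(u : (Fin d → ℤ) → ℂ) n‖ ^ (2:ℝ≥0∞).toReal))

def transL (v : Fin d → ℤ) : l2Zd d →L[ℂ] l2Zd d :=
  LinearMap.mkContinuous (transLM v) 1 (fun u => by rw [norm_transLM]; simp)

lemma transL_apply (v : Fin d → ℤ) (u : l2Zd d) (n : Fin d → ℤ) :
    (transL v u : (Fin d → ℤ) → ℂ) n = u (n + v) := rfl

lemma inner_transL (v : Fin d → ℤ) (u w : l2Zd d) :
    (inner ℂ (transL v u) w : ℂ) = inner ℂ u (transL (-v) w) := by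
  rw [lp.inner_eq_tsum, lp.inner_eq_tsum]
  simp only [transL_apply]
  rw [← (Equiv.addRight v).tsum_eq
      (fun m => (inner ℂ ((u : (Fin d → ℤ) → ℂ) m) ((w : (Fin d → ℤ) → ℂ) (m + -v)) : ℂ))]
  refine tsum_congr fun n => ?_
  simp

lemma symm_transL (v : Fin d → ℤ) :
    ((transL v + transL (-v) : l2Zd d →L[ℂ] l2Zd d) : l2Zd d →ₗ[ℂ] l2Zd d).IsSymmetric := by
  intro u w
  simp only [ContinuousLinearMap.coe_coe, ContinuousLinearMap.add_apply, inner_add_left,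
    inner_add_right]
  rw [inner_transL v u w, inner_transL (-v) u w, neg_neg, add_comm]

lemma update_add_single (d : ℕ) (i : Fin d) (n : Fin d → ℤ) (k : ℤ) :
    n + Pi.single i k = Function.update n i (n i + k) := by
  ext j
  by_cases h : j = i
  · subst h; simp
  · simp [h, Pi.single_apply, Function.update_of_ne h]

/-- The bounded operator Σ_i Δ_i(4 − Δ_i) = Σ_i (2 − S_i² − S_i*²). -/
def Bop (d : ℕ) : l2Zd d →L[ℂ] l2Zd d :=
  ∑ i : Fin d, ((2 : ℂ) • (1 : l2Zd d →L[ℂ] l2Zd d)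
    - (transL (Pi.single i 2) + transL (-(Pi.single i 2))))

lemma Bop_selfAdjoint (d : ℕ) : IsSelfAdjoint (Bop d) := by
  refine Finset.sum_induction _ IsSelfAdjoint (fun a b ha hb => ha.add hb)
    (by simp) (fun i _ => ?_)
  refine IsSelfAdjoint.sub (IsSelfAdjoint.smul (by simp) (IsSelfAdjoint.one _)) ?_
  exact ContinuousLinearMap.isSelfAdjoint_iff_isSymmetric.2 (symm_transL (Pi.single i 2))

lemma Bop_apply (d : ℕ) (u : l2Zd d) (n : Fin d → ℤ) :
    (Bop d u) n = ∑ i : Fin d,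
      (2 * u n - u (Function.update n i (n i + 2)) - u (Function.update n i (n i - 2))) := by
  simp only [Bop, ContinuousLinearMap.sum_apply, ContinuousLinearMap.sub_apply,
    ContinuousLinearMap.add_apply, ContinuousLinearMap.smul_apply, ContinuousLinearMap.one_apply]
  rw [lp.coeFn_sum]
  rw [Finset.sum_apply]
  refine Finset.sum_congr rfl fun i _ => ?_
  rw [lp.coeFn_sub, Pi.sub_apply, lp.coeFn_add, Pi.add_apply, lp.coeFn_smul, Pi.smul_apply,
    transL_apply, transL_apply, update_add_single]
  have : n + -Pi.single i 2 = Function.update n i (n i - 2) := by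
    have : (-Pi.single i 2 : Fin d → ℤ) = Pi.single i (-2 : ℤ) := by
      ext j; by_cases h : j = i <;> simp [h, Pi.single_apply]
    rw [this, update_add_single]
    congr 1
  rw [this]
  simp only [smul_eq_mul]
  ring

end CommAux

/-- For finitely supported u, i(Δ(A₀u) − A₀(Δu)) = Σ_{i=1}^d Δ_i(4 − Δ_i)u;
in particular the commutator form [Δ, iA₀] extends to the bounded self-adjoint operator
Σ_{i=1}^d Δ_i(4 − Δ_i). -/
theorem laplacian_A0_commutator (d : ℕ) (hd : 1 ≤ d) :
    (∀ u : (Fin d → ℤ) → ℂ, (Function.support u).Finite → ∀ n : Fin d → ℤ,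
      Complex.I * (lapFun d (A0fun d u) n - A0fun d (lapFun d u) n) =
        ∑ i : Fin d, lapIFun d i (fun m => 4 * u m - lapIFun d i u m) n) ∧
    ∃ B : l2Zd d →L[ℂ] l2Zd d, IsSelfAdjoint B ∧
      ∀ (u : l2Zd d) (n : Fin d → ℤ),
        (B u) n = ∑ i : Fin d, lapIFun d i (fun m => 4 * u m - lapIFun d i (⇑u) m) n := by
  constructor
  · intro u _ n
    rw [CommAux.key u n]
    exact Finset.sum_congr rfl fun i _ => (CommAux.rhs_lemma d i u n).symm
  · refine ⟨CommAux.Bop d, CommAux.Bop_selfAdjoint d, fun u n => ?_⟩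
    rw [CommAux.Bop_apply d u n]
    exact Finset.sum_congr rfl fun i _ => (CommAux.rhs_lemma d i (⇑u) n).symm
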